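/- arXiv:2206.14044 — 2 statements merged into one kernel-verified Lean document; each statement's English description precedes it below -/
import Mathlib

section
/- Let (μ_λ)_{λ∈Λ} be a measurable family of Borel regular outer measures on ℝ^n. Then: (i) 𝓘^m_1(E) = inf{ ∫_Λ μ_λ(B) dλ : B Borel, E ⊂ B } for every E ⊂ ℝ^n; (ii) 𝓘̂_m(B × U) ≤ ∫_U μ_λ(B) dλ for every Borel B ⊂ ℝ^n and every Borel U ⊂ Λ; (iii) 𝓘^m_1(B) = ζ_1(B) = ∫_Λ μ_λ(B) dλ for every Borel B ⊂ ℝ^n. -/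
open MeasureTheory Metric Set Filter
open scoped ENNReal NNReal Topology

noncomputable section

abbrev Euc (n : ℕ) : Type := EuclideanSpace ℝ (Fin n)

namespace Slicing

variable {n m l : ℕ}

/-- The map `T_{x x'}(λ) = (P_λ(x) - P_λ(x'))/|x - x'|`. -/
def transMap (P : Euc n → Euc l → Euc m) (x x' : Euc n) (lam : Euc l) : Euc m :=
  ‖x - x'‖⁻¹ • (P x lam - P x' lam)

/-- The `m`-dimensional Jacobian `J D = √det(D ∘ Dᵀ)` of a linear map `D : ℝˡ → ℝᵐ`. -/
def jacobian (D : Euc l →L[ℝ] Euc m) : ℝ :=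
  Real.sqrt (LinearMap.det
    ((D.comp (ContinuousLinearMap.adjoint D) : Euc m →L[ℝ] Euc m) : Euc m →ₗ[ℝ] Euc m))

/-- A transversal family of maps `(P_λ)_{λ ∈ Λ}` in the sense of Definition 3.4. -/
structure IsTransversalFamily (Λ : Set (Euc l)) (P : Euc n → Euc l → Euc m) : Prop where
  isOpen : IsOpen Λ
  isBounded : Bornology.IsBounded Λ
  continuousOn : ContinuousOn (fun q : Euc n × Euc l => P q.1 q.2) (Set.univ ×ˢ Λ)
  contDiffOn : ∀ x : Euc n, ContDiffOn ℝ 2 (P x) Λ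
  derivBound : ∀ j : ℕ, j = 1 ∨ j = 2 → ∃ C : ℝ, ∀ x : Euc n, ∀ lam ∈ Λ,
    ‖iteratedFDeriv ℝ j (P x) lam‖ ≤ C
  transversality : ∃ C' : ℝ, 0 < C' ∧ ∀ x x' : Euc n, x ≠ x' → ∀ lam ∈ Λ,
    ‖transMap P x x' lam‖ ≤ C' → C' ≤ jacobian (fderiv ℝ (transMap P x x') lam)
  transDerivBound : ∃ C'' : ℝ, ∀ x x' : Euc n, x ≠ x' → ∀ lam ∈ Λ,
    ‖fderiv ℝ (transMap P x x') lam‖ ≤ C'' ∧ ‖iteratedFDeriv ℝ 2 (transMap P x x') lam‖ ≤ C''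

/-- The cone `X(a,λ,s)`. -/
def coneX (P : Euc n → Euc l → Euc m) (a : Euc n) (lam : Euc l) (s : ℝ) : Set (Euc n) :=
  {x | ‖P x lam - P a lam‖ < s * ‖x - a‖}

/-- The truncated cone `X(a,r,λ,s)`. -/
def coneXr (P : Euc n → Euc l → Euc m) (a : Euc n) (r : ℝ) (lam : Euc l) (s : ℝ) :
    Set (Euc n) :=
  coneX P a lam s ∩ closedBall a r

/-- The cone `L_V(a,λ,s)`. -/
def coneL (P : Euc n → Euc l → Euc m) (V : Submodule ℝ (Euc l)) (a : Euc n) (lam : Euc l)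
    (s : ℝ) : Set (Euc n) :=
  {x | ∃ lam' : Euc l, P x lam' = P a lam' ∧ ‖lam' - lam‖ < s ∧ lam' - lam ∈ V}

/-- `V` is an `m`-dimensional coordinate plane of `ℝˡ`. -/
def IsCoordPlane (m : ℕ) (V : Submodule ℝ (Euc l)) : Prop :=
  ∃ I : Finset (Fin l), I.card = m ∧
    V = Submodule.span ℝ {v : Euc l | ∃ i ∈ I, v = EuclideanSpace.single i (1 : ℝ)}

/-- A countably `m`-rectifiable subset of `ℝⁿ`. -/
def CountablyRectifiable (m : ℕ) (R : Set (Euc n)) : Prop :=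
  ∃ (E : ℕ → Set (Euc m)) (f : ℕ → Euc m → Euc n),
    (∀ i, Bornology.IsBounded (E i)) ∧
    (∀ i, ∃ K : ℝ≥0, LipschitzOnWith K (f i) (E i)) ∧
    R = ⋃ i, f i '' E i

/-- An `m`-rectifiable measure: `μ = θ · (H^m ⌊ R)`. -/
def IsRectifiableMeasure (m : ℕ) (μ : Measure (Euc n)) : Prop :=
  ∃ (R : Set (Euc n)) (θ : Euc n → ℝ), CountablyRectifiable m R ∧ Measurable θ ∧
    μ = (μH[(m : ℝ)].restrict R).withDensity (fun x => ENNReal.ofReal (θ x))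

/-- `S` is an `m`-dimensional `C¹` submanifold of `ℝⁿ`. -/
def IsC1Submanifold (m : ℕ) (S : Set (Euc n)) : Prop :=
  ∀ x ∈ S, ∃ (U : Set (Euc n)) (V : Set (Euc m)) (f : Euc m → Euc n),
    IsOpen U ∧ x ∈ U ∧ IsOpen V ∧ ContDiffOn ℝ 1 f V ∧ Set.InjOn f V ∧
    (∀ y ∈ V, Function.Injective (fderivWithin ℝ f V y)) ∧ S ∩ U = f '' V

/-- `E` is purely `(φ,m)`-unrectifiable. -/
def PurelyUnrectifiable (m : ℕ) (φ : Measure (Euc n)) (E : Set (Euc n)) : Prop :=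
  ∀ S : Set (Euc n), IsC1Submanifold m S → φ (S ∩ E) = 0

/-- `A` is countably `(φ,m)`-rectifiable. -/
def CountablyRectifiableWrt (m : ℕ) (φ : Measure (Euc n)) (A : Set (Euc n)) : Prop :=
  ∃ R : Set (Euc n), CountablyRectifiable m R ∧ φ (A \ R) = 0

/-- Carathéodory's construction from a set function `ζ`, using countable Borel coverings. -/
def carath {X : Type*} [EMetricSpace X] [MeasurableSpace X] (ζ : Set X → ℝ≥0∞) (E : Set X) :
    ℝ≥0∞ :=
  ⨆ (δ : ℝ≥0∞) (_ : 0 < δ), ⨅ (G : ℕ → Set X) (_ : ∀ i, MeasurableSet (G i))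
    (_ : E ⊆ ⋃ i, G i) (_ : ∀ i, EMetric.diam (G i) ≤ δ), ∑' i, ζ (G i)

/-- `L^p` norm of an `ℝ≥0∞`-valued function. -/
def lpNormENN {α : Type*} [MeasurableSpace α] (ν : Measure α) (p : ℝ≥0∞) (f : α → ℝ≥0∞) :
    ℝ≥0∞ :=
  if p = ∞ then essSup f ν else (∫⁻ a, f a ^ p.toReal ∂ν) ^ (1 / p.toReal)

/-- The set function `ζ_p(B) = ‖λ ↦ μ_λ(B)‖_{L^p(Λ)}`. -/
def zetaP (Λ : Set (Euc l)) (μ : Euc l → Measure (Euc n)) (p : ℝ≥0∞) (B : Set (Euc n)) :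
    ℝ≥0∞ :=
  lpNormENN (volume.restrict Λ) p (fun lam => μ lam B)

/-- The measure `𝓘^m_p` obtained from `ζ_p` via Carathéodory's construction. -/
def genIGMeasure (Λ : Set (Euc l)) (μ : Euc l → Measure (Euc n)) (p : ℝ≥0∞) :
    Set (Euc n) → ℝ≥0∞ :=
  carath (zetaP Λ μ p)

/-- Upper Lebesgue integral. -/
def upperLintegral {α : Type*} [MeasurableSpace α] (ν : Measure α) (f : α → ℝ≥0∞) : ℝ≥0∞ :=
  ⨅ (g : α → ℝ≥0∞) (_ : Measurable g) (_ : ∀ a, f a ≤ g a), ∫⁻ a, g a ∂ν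

/-- The set function `ζ̂(B') = ∫*_Λ μ_λ(B'_λ) dλ`. -/
def zetaHat (Λ : Set (Euc l)) (μ : Euc l → Measure (Euc n)) (B' : Set (Euc n × Euc l)) :
    ℝ≥0∞ :=
  upperLintegral (volume.restrict Λ) (fun lam => μ lam {x | (x, lam) ∈ B'})

/-- The measure `𝓘̂_m` on the product, obtained from `ζ̂` via Carathéodory's construction. -/
def hatIG (Λ : Set (Euc l)) (μ : Euc l → Measure (Euc n)) : Set (Euc n × Euc l) → ℝ≥0∞ :=
  carath (zetaHat Λ μ)

/-- A measurable family of (Borel regular outer) measures. -/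
def MeasurableFamily (Λ : Set (Euc l)) (μ : Euc l → Measure (Euc n)) : Prop :=
  ∀ B : Set (Euc n), MeasurableSet B → AEMeasurable (fun lam => μ lam B) (volume.restrict Λ)

/-- `𝓘^m_p` is an integralgeometric measure (Definition 4.1). -/
def IsIntegralgeometric (Λ : Set (Euc l)) (P : Euc n → Euc l → Euc m)
    (μ : Euc l → Measure (Euc n)) : Prop :=
  (∀ᵐ lam ∂(volume.restrict Λ), (μ lam).map (fun x => P x lam) ≪ volume) ∧
  ∃ E : Set (Euc n), MeasurableSet E ∧
    (∀ᵐ lam ∂(volume.restrict Λ), μ lam Eᶜ = 0) ∧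
    (∀ᵐ lam ∂(volume.restrict Λ), ∀ᵐ y ∂((μ lam).map (fun x => P x lam)),
      (E ∩ (fun x => P x lam) ⁻¹' {y}).Finite)

/-- A disintegration `ν = η_y ⊗ Q_♯ν`. -/
def IsDisintegration {X Y : Type*} [MeasurableSpace X] [MeasurableSpace Y] (ν : Measure X)
    (Q : X → Y) (η : Y → Measure X) : Prop :=
  (∀ y, IsProbabilityMeasure (η y)) ∧
  (∀ᵐ y ∂(ν.map Q), η y (Q ⁻¹' {y})ᶜ = 0) ∧
  (∀ B : Set X, MeasurableSet B → Measurable fun y => η y B) ∧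
  (∀ B : Set X, MeasurableSet B → ν B = ∫⁻ y, η y B ∂(ν.map Q))

/-- A `0`-rectifiable measure (a countable sum of nonnegative point masses). -/
def ZeroRectifiable {X : Type*} [MeasurableSpace X] (ν : Measure X) : Prop :=
  ∃ R : Set X, R.Countable ∧ ν Rᶜ = 0

/-- A measure supported on a finite set. -/
def FinitelySupported {X : Type*} [MeasurableSpace X] (ν : Measure X) : Prop :=
  ∃ F : Set X, F.Finite ∧ ν Fᶜ = 0

/-- `ω(m)`, the Lebesgue measure of the unit ball of `ℝᵐ`. -/
def omegaBall (m : ℕ) : ℝ := (volume (Metric.ball (0 : Euc m) 1)).toReal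

/-- The `m`-dimensional upper density `Θ^{*m}(ν, a)`. -/
def upperDensity (m : ℕ) (ν : Measure (Euc n)) (a : Euc n) : ℝ≥0∞ :=
  Filter.limsup
    (fun r : ℝ => ν (closedBall a r) / ENNReal.ofReal (omegaBall m * r ^ m)) (𝓝[>] 0)

/-- `sup_{0<r<δ} (rs)^{-m} φ(E ∩ X(a,r,λ,s))`, then `limsup` as `s → 0⁺`. -/
def coneDensity (P : Euc n → Euc l → Euc m) (φ : Measure (Euc n)) (E : Set (Euc n))
    (a : Euc n) (lam : Euc l) (δ : ℝ) : ℝ≥0∞ :=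
  Filter.limsup (fun s : ℝ =>
    ⨆ (r : ℝ) (_ : r ∈ Set.Ioo (0 : ℝ) δ),
      φ (E ∩ coneXr P a r lam s) / ENNReal.ofReal ((r * s) ^ m)) (𝓝[>] 0)



/-- The Grassmannian of `m`-dimensional linear subspaces of `ℝⁿ`. -/
def Grassmannian (n m : ℕ) : Type :=
  {V : Submodule ℝ (Euc n) // Module.finrank ℝ V = m}

/-- The orthogonal projection `π_V : ℝⁿ → V ⊆ ℝⁿ`. -/
def projG {n m : ℕ} (V : Grassmannian n m) : Euc n →L[ℝ] Euc n :=
  (V.1.subtypeL).comp (Submodule.orthogonalProjectionOnto V.1)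

instance {n m : ℕ} : TopologicalSpace (Grassmannian n m) :=
  TopologicalSpace.induced projG inferInstance

instance {n m : ℕ} : MeasurableSpace (Grassmannian n m) := borel _

instance {n m : ℕ} : BorelSpace (Grassmannian n m) := ⟨rfl⟩

/-- The action of an orthogonal transformation on the Grassmannian. -/
def grMap {n m : ℕ} (g : Euc n ≃ₗᵢ[ℝ] Euc n) (V : Grassmannian n m) : Grassmannian n m :=
  ⟨V.1.map (g.toLinearEquiv : Euc n →ₗ[ℝ] Euc n), by
    rw [LinearEquiv.finrank_map_eq g.toLinearEquiv V.1]; exact V.2⟩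

/-- A measure on the Grassmannian is invariant under the action of `O(n)`. -/
def IsONInvariant {n m : ℕ} (γ : Measure (Grassmannian n m)) : Prop :=
  ∀ g : Euc n ≃ₗᵢ[ℝ] Euc n, Measure.map (grMap g) γ = γ

/-- `η_p(B) = ‖V ↦ H^m(π_V(B))‖_{L^p(γ)}`. -/
def etaP {n m : ℕ} (γ : Measure (Grassmannian n m)) (p : ℝ≥0∞) (B : Set (Euc n)) : ℝ≥0∞ :=
  lpNormENN γ p (fun V => μH[(m : ℝ)] (projG V '' B))

/-- Federer's integralgeometric measure `I^m_p`. -/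
def IGMeasure {n m : ℕ} (γ : Measure (Grassmannian n m)) (p : ℝ≥0∞) :
    Set (Euc n) → ℝ≥0∞ :=
  carath (etaP γ p)

/-- `μ_V(B) = ∫_V H^0(B ∩ π_V⁻¹(y)) dH^m(y)`. -/
def muV {n m : ℕ} (V : Grassmannian n m) (B : Set (Euc n)) : ℝ≥0∞ :=
  ∫⁻ y in (V.1 : Set (Euc n)), Measure.count (B ∩ projG V ⁻¹' {y}) ∂μH[(m : ℝ)]



/-- `ζ_p(B) = ‖V ↦ μ_V(B)‖_{L^p(γ)}` for the measures `μ_V`. -/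
def zetaGr {n m : ℕ} (γ : Measure (Grassmannian n m)) (p : ℝ≥0∞) (B : Set (Euc n)) : ℝ≥0∞ :=
  lpNormENN γ p (fun V => muV V B)

/-- The measure `𝓘^m_p` obtained from `ζ_p` via Carathéodory's construction. -/
def IGMeasureAlt {n m : ℕ} (γ : Measure (Grassmannian n m)) (p : ℝ≥0∞) :
    Set (Euc n) → ℝ≥0∞ :=
  carath (zetaGr γ p)


/-- A countable Borel partition of a separable metric space into sets of small diameter. -/
lemma exists_borel_partition {X : Type*} [MetricSpace X] [TopologicalSpace.SeparableSpace X]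
    [Nonempty X] [MeasurableSpace X] [BorelSpace X] {δ : ℝ≥0∞} (hδ : 0 < δ) :
    ∃ D : ℕ → Set X, (∀ i, MeasurableSet (D i)) ∧ Pairwise (Function.onFun Disjoint D) ∧
      (⋃ i, D i) = Set.univ ∧ ∀ i, EMetric.diam (D i) ≤ δ := by
  obtain ⟨u, hu⟩ := TopologicalSpace.exists_dense_seq X
  refine ⟨disjointed (fun i => EMetric.ball (u i) (δ / 2)), fun i =>
    MeasurableSet.disjointed (fun i => EMetric.isOpen_ball.measurableSet) i,
    disjoint_disjointed _, ?_, fun i => le_trans (EMetric.diam_mono (disjointed_subset _ i))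
      (le_trans EMetric.diam_ball ENNReal.mul_div_le)⟩
  rw [iUnion_disjointed, eq_univ_iff_forall]
  intro x
  have hpos : (0 : ℝ≥0∞) < δ / 2 := ENNReal.div_pos hδ.ne' ENNReal.ofNat_ne_top
  have hx := hu x
  rw [EMetric.mem_closure_iff] at hx
  obtain ⟨y, ⟨i, rfl⟩, hy⟩ := hx _ hpos
  exact mem_iUnion.2 ⟨i, Metric.mem_eball.2 hy⟩

lemma zetaP_one_eq {n l : ℕ} (Λ : Set (Euc l)) (μ : Euc l → Measure (Euc n))
    (B : Set (Euc n)) : zetaP Λ μ 1 B = ∫⁻ lam in Λ, μ lam B := by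
  simp [zetaP, lpNormENN]

lemma upperLintegral_le_of_aemeasurable {α : Type*} [MeasurableSpace α] (ν : Measure α)
    {f : α → ℝ≥0∞} (hf : AEMeasurable f ν) : upperLintegral ν f ≤ ∫⁻ a, f a ∂ν := by
  set t := toMeasurable ν {a | f a ≠ hf.mk f a} with ht_def
  have ht0 : ν t = 0 := by
    rw [ht_def, measure_toMeasurable]
    exact ae_iff.mp hf.ae_eq_mk
  set g : α → ℝ≥0∞ := fun a => hf.mk f a + t.indicator (fun _ => ∞) a with hg_def
  have hgm : Measurable g := hf.measurable_mk.add
    (Measurable.indicator measurable_const (measurableSet_toMeasurable _ _))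
  have hfg : ∀ a, f a ≤ g a := by
    intro a
    by_cases h : f a = hf.mk f a
    · exact h.le.trans le_self_add
    · have hat : a ∈ t := subset_toMeasurable _ _ h
      simp [hg_def, Set.indicator_of_mem hat]
  have h1 : upperLintegral ν f ≤ ∫⁻ a, g a ∂ν := by
    rw [upperLintegral]
    exact iInf_le_of_le g (iInf_le_of_le hgm (iInf_le_of_le hfg le_rfl))
  refine h1.trans (le_of_eq ?_)
  rw [hg_def]
  rw [lintegral_add_right _ (Measurable.indicator measurable_const
      (measurableSet_toMeasurable _ _)),
    lintegral_indicator (measurableSet_toMeasurable _ _), setLIntegral_const, ht0,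
    mul_zero, add_zero]
  exact lintegral_congr_ae hf.ae_eq_mk.symm

/-- Proposition 4.3: basic identities for `𝓘^m_1` and `𝓘̂_m`. -/
theorem genIGMeasure_one_identities
    {n l : ℕ} (hn : 1 ≤ n)
    (Λ : Set (Euc l)) (hΛo : IsOpen Λ) (hΛb : Bornology.IsBounded Λ)
    (μ : Euc l → Measure (Euc n)) (hμ : MeasurableFamily Λ μ) :
    (∀ E : Set (Euc n), genIGMeasure Λ μ 1 E =
        ⨅ (B : Set (Euc n)) (_ : MeasurableSet B) (_ : E ⊆ B), ∫⁻ lam in Λ, μ lam B) ∧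
    (∀ B : Set (Euc n), MeasurableSet B → ∀ U : Set (Euc l), MeasurableSet U → U ⊆ Λ →
        hatIG Λ μ (B ×ˢ U) ≤ ∫⁻ lam in U, μ lam B) ∧
    (∀ B : Set (Euc n), MeasurableSet B →
        genIGMeasure Λ μ 1 B = zetaP Λ μ 1 B ∧
        genIGMeasure Λ μ 1 B = ∫⁻ lam in Λ, μ lam B) := by
  have key : ∀ E : Set (Euc n), genIGMeasure Λ μ 1 E =
      ⨅ (B : Set (Euc n)) (_ : MeasurableSet B) (_ : E ⊆ B), ∫⁻ lam in Λ, μ lam B := by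
    intro E
    have hinf : ∀ δ : ℝ≥0∞, 0 < δ →
        (⨅ (G : ℕ → Set (Euc n)) (_ : ∀ i, MeasurableSet (G i)) (_ : E ⊆ ⋃ i, G i)
          (_ : ∀ i, EMetric.diam (G i) ≤ δ), ∑' i, zetaP Λ μ 1 (G i)) =
        ⨅ (B : Set (Euc n)) (_ : MeasurableSet B) (_ : E ⊆ B), ∫⁻ lam in Λ, μ lam B := by
      intro δ hδ
      apply le_antisymm
      · refine le_iInf fun B => le_iInf fun hB => le_iInf fun hEB => ?_
        obtain ⟨D, hDm, hDd, hDu, hDδ⟩ := exists_borel_partition (X := Euc n) hδ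
        have hGm : ∀ i, MeasurableSet (B ∩ D i) := fun i => hB.inter (hDm i)
        have hdisj : Pairwise (Function.onFun Disjoint (fun i => B ∩ D i)) :=
          fun i j h => Disjoint.mono inter_subset_right inter_subset_right (hDd h)
        refine iInf_le_of_le (fun i => B ∩ D i) <| iInf_le_of_le hGm <|
          iInf_le_of_le ?_ <| iInf_le_of_le
            (fun i => le_trans (EMetric.diam_mono inter_subset_right) (hDδ i)) ?_
        · intro x hx
          obtain ⟨i, hi⟩ := mem_iUnion.1 (hDu ▸ mem_univ x)
          exact mem_iUnion.2 ⟨i, hEB hx, hi⟩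
        · have hBu : ∀ lam : Euc l, μ lam B = ∑' i, μ lam (B ∩ D i) := by
            intro lam
            rw [← measure_iUnion hdisj hGm, ← inter_iUnion, hDu, inter_univ]
          calc ∑' i, zetaP Λ μ 1 (B ∩ D i)
              = ∑' i, ∫⁻ lam in Λ, μ lam (B ∩ D i) := by
                simp only [zetaP_one_eq]
            _ = ∫⁻ lam in Λ, ∑' i, μ lam (B ∩ D i) :=
                (lintegral_tsum fun i => hμ _ (hGm i)).symm
            _ = ∫⁻ lam in Λ, μ lam B := lintegral_congr fun lam => (hBu lam).symm
            _ ≤ ∫⁻ lam in Λ, μ lam B := le_rfl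
      · refine le_iInf fun G => le_iInf fun hG => le_iInf fun hEG => le_iInf fun _ => ?_
        refine le_trans (iInf_le_of_le (⋃ i, G i) <| iInf_le_of_le (MeasurableSet.iUnion hG) <|
          iInf_le_of_le hEG le_rfl) ?_
        calc ∫⁻ lam in Λ, μ lam (⋃ i, G i)
            ≤ ∫⁻ lam in Λ, ∑' i, μ lam (G i) :=
              lintegral_mono fun lam => measure_iUnion_le G
          _ = ∑' i, ∫⁻ lam in Λ, μ lam (G i) := lintegral_tsum fun i => hμ _ (hG i)
          _ = ∑' i, zetaP Λ μ 1 (G i) := by simp only [zetaP_one_eq]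
    apply le_antisymm
    · exact iSup_le fun δ => iSup_le fun hδ => (hinf δ hδ).le
    · exact le_iSup_of_le 1 (le_iSup_of_le one_pos (hinf 1 one_pos).ge)
  refine ⟨key, ?_, ?_⟩
  · intro B hB U hU hUΛ
    refine iSup_le fun δ => iSup_le fun hδ => ?_
    obtain ⟨D, hDm, hDd, hDu, hDδ⟩ := exists_borel_partition (X := Euc n) hδ
    obtain ⟨D', hD'm, hD'd, hD'u, hD'δ⟩ := exists_borel_partition (X := Euc l) hδ
    have hmeasU : ∀ s : Set (Euc n), MeasurableSet s →
        AEMeasurable (fun lam => μ lam s) (volume.restrict U) := by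
      intro s hs
      have h1 := (hμ s hs).restrict (s := U)
      rwa [Measure.restrict_restrict hU, inter_eq_left.2 hUΛ] at h1
    have hzh : ∀ s : Set (Euc n), MeasurableSet s → ∀ t : Set (Euc l), MeasurableSet t →
        t ⊆ Λ → zetaHat Λ μ (s ×ˢ t) ≤ ∫⁻ lam in t, μ lam s := by
      intro s hs t ht htΛ
      have hsl : (fun lam => μ lam {x | (x, lam) ∈ s ×ˢ t}) =
          t.indicator (fun lam => μ lam s) := by
        funext lam
        by_cases h : lam ∈ t
        · simp [Set.indicator_of_mem h, Set.mem_prod, h]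
        · simp [Set.indicator_of_notMem h, Set.mem_prod, h]
      rw [zetaHat, hsl]
      have heq : ∫⁻ lam in Λ, t.indicator (fun lam => μ lam s) lam = ∫⁻ lam in t, μ lam s := by
        rw [lintegral_indicator ht, Measure.restrict_restrict ht, inter_eq_left.2 htΛ]
      exact le_trans (upperLintegral_le_of_aemeasurable _ ((hμ s hs).indicator ht)) heq.le
    set e : ℕ ≃ ℕ × ℕ := (Denumerable.eqv (ℕ × ℕ)).symm with he
    set H : ℕ × ℕ → Set (Euc n × Euc l) :=
      fun p => (B ∩ D p.1) ×ˢ (U ∩ D' p.2) with hH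
    have hHm : ∀ p : ℕ × ℕ, MeasurableSet (H p) :=
      fun p => (hB.inter (hDm p.1)).prod (hU.inter (hD'm p.2))
    refine iInf_le_of_le (fun k => H (e k)) <| iInf_le_of_le (fun k => hHm (e k)) <|
      iInf_le_of_le ?_ <| iInf_le_of_le ?_ ?_
    · rintro ⟨x, lam⟩ ⟨hx, hlam⟩
      obtain ⟨i, hi⟩ := mem_iUnion.1 (hDu ▸ mem_univ x)
      obtain ⟨j, hj⟩ := mem_iUnion.1 (hD'u ▸ mem_univ lam)
      refine mem_iUnion.2 ⟨e.symm (i, j), ?_⟩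
      simp only [hH, Equiv.apply_symm_apply]
      exact ⟨⟨hx, hi⟩, ⟨hlam, hj⟩⟩
    · intro k
      refine EMetric.diam_le fun p hp q hq => ?_
      rw [Prod.edist_eq]
      exact max_le
        (le_trans (EMetric.edist_le_diam_of_mem hp.1.2 hq.1.2) (hDδ _))
        (le_trans (EMetric.edist_le_diam_of_mem hp.2.2 hq.2.2) (hD'δ _))
    · have hUun : (⋃ j, U ∩ D' j) = U := by rw [← inter_iUnion, hD'u, inter_univ]
      have hU'd : Pairwise (Function.onFun Disjoint (fun j => U ∩ D' j)) :=
        fun i j h => Disjoint.mono inter_subset_right inter_subset_right (hD'd h)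
      calc ∑' k, zetaHat Λ μ (H (e k))
          = ∑' p : ℕ × ℕ, zetaHat Λ μ (H p) := e.tsum_eq fun p => zetaHat Λ μ (H p)
        _ = ∑' (i : ℕ) (j : ℕ), zetaHat Λ μ ((B ∩ D i) ×ˢ (U ∩ D' j)) :=
            ENNReal.tsum_prod (f := fun i j => zetaHat Λ μ ((B ∩ D i) ×ˢ (U ∩ D' j)))
        _ ≤ ∑' (i : ℕ) (j : ℕ), ∫⁻ lam in U ∩ D' j, μ lam (B ∩ D i) :=
            ENNReal.tsum_le_tsum fun i => ENNReal.tsum_le_tsum fun j =>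
              hzh _ (hB.inter (hDm i)) _ (hU.inter (hD'm j))
                (le_trans inter_subset_left hUΛ)
        _ = ∑' i : ℕ, ∫⁻ lam in U, μ lam (B ∩ D i) := by
            refine tsum_congr fun i => ?_
            rw [← hUun, lintegral_iUnion (fun j => hU.inter (hD'm j)) hU'd, hUun]
        _ = ∫⁻ lam in U, ∑' i, μ lam (B ∩ D i) :=
            (lintegral_tsum fun i => hmeasU _ (hB.inter (hDm i))).symm
        _ = ∫⁻ lam in U, μ lam B := by
            refine lintegral_congr fun lam => ?_
            rw [← measure_iUnion (fun i j h => Disjoint.mono inter_subset_right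
              inter_subset_right (hDd h)) (fun i => hB.inter (hDm i)),
              ← inter_iUnion, hDu, inter_univ]
  · intro B hB
    have h2 : genIGMeasure Λ μ 1 B = ∫⁻ lam in Λ, μ lam B := by
      rw [key B]
      apply le_antisymm
      · exact iInf_le_of_le B (iInf_le_of_le hB (iInf_le_of_le subset_rfl le_rfl))
      · refine le_iInf fun B' => le_iInf fun hB' => le_iInf fun hBB' => ?_
        exact lintegral_mono fun lam => measure_mono hBB'
    exact ⟨h2.trans (zetaP_one_eq Λ μ B).symm, h2⟩

end Slicing
end
end

section
/- Let (μ_λ)_{λ∈Λ} be a measurable family of Borel regular outer measures on ℝ^n and suppose 𝓘^m_p is finite for some p ∈ (1,∞]. Let (η_x)_{x∈ℝ^n} be a family of Radon measures on Λ disintegrating 𝓘̂_m over π_{1♯}𝓘̂_m, i.e. x ↦ η_x(U) is Borel for every Borel U ⊂ Λ and 𝓘̂_m(A) = ∫_{ℝ^n} η_x(A_x) d(π_{1♯}𝓘̂_m)(x) for every Borel A ⊂ ℝ^n × Λ, where π_1 : ℝ^n × Λ → ℝ^n is the projection and A_x := {λ : (x,λ) ∈ A}. Then η_x ≪ L^l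 for π_{1♯}𝓘̂_m-a.e. x ∈ ℝ^n. -/
open MeasureTheory Metric Set Filter
open scoped ENNReal NNReal Topology

noncomputable section

namespace Slicing

variable {n m l : ℕ}

/-! ### Auxiliary lemmas for Statement 15 -/

section CarathAux

variable {X : Type*} [EMetricSpace X] [MeasurableSpace X]

/-- The inner infimum in Carathéodory's construction at scale `δ`. -/
def covInf (ζ : Set X → ℝ≥0∞) (δ : ℝ≥0∞) (E : Set X) : ℝ≥0∞ :=
  ⨅ (G : ℕ → Set X) (_ : ∀ i, MeasurableSet (G i))
    (_ : E ⊆ ⋃ i, G i) (_ : ∀ i, EMetric.diam (G i) ≤ δ), ∑' i, ζ (G i)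

lemma carath_eq_iSup (ζ : Set X → ℝ≥0∞) (E : Set X) :
    carath ζ E = ⨆ (δ : ℝ≥0∞) (_ : 0 < δ), covInf ζ δ E := rfl

lemma covInf_le_of_cover {ζ : Set X → ℝ≥0∞} {δ : ℝ≥0∞} {E : Set X} {G : ℕ → Set X}
    (hm : ∀ i, MeasurableSet (G i)) (hcov : E ⊆ ⋃ i, G i)
    (hdiam : ∀ i, EMetric.diam (G i) ≤ δ) :
    covInf ζ δ E ≤ ∑' i, ζ (G i) := by
  refine iInf_le_of_le G ?_
  exact iInf_le_of_le hm (iInf_le_of_le hcov (iInf_le_of_le hdiam le_rfl))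

lemma covInf_anti {ζ : Set X → ℝ≥0∞} {δ₁ δ₂ : ℝ≥0∞} (h : δ₁ ≤ δ₂) (E : Set X) :
    covInf ζ δ₂ E ≤ covInf ζ δ₁ E := by
  refine le_iInf fun G => le_iInf fun hm => le_iInf fun hcov => le_iInf fun hdiam => ?_
  exact covInf_le_of_cover hm hcov fun i => (hdiam i).trans h

lemma covInf_mono {ζ : Set X → ℝ≥0∞} {δ : ℝ≥0∞} {E E' : Set X} (h : E ⊆ E') :
    covInf ζ δ E ≤ covInf ζ δ E' := by
  refine le_iInf fun G => le_iInf fun hm => le_iInf fun hcov => le_iInf fun hdiam => ?_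
  exact covInf_le_of_cover hm (h.trans hcov) hdiam

lemma covInf_le_carath {ζ : Set X → ℝ≥0∞} {δ : ℝ≥0∞} (hδ : 0 < δ) (E : Set X) :
    covInf ζ δ E ≤ carath ζ E := by
  rw [carath_eq_iSup]
  exact le_iSup₂ (f := fun δ' (_ : 0 < δ') => covInf ζ δ' E) δ hδ

lemma carath_mono {ζ : Set X → ℝ≥0∞} {E E' : Set X} (h : E ⊆ E') :
    carath ζ E ≤ carath ζ E' := by
  rw [carath_eq_iSup, carath_eq_iSup]
  exact iSup₂_mono fun δ hδ => covInf_mono h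

/-- Superadditivity of the Carathéodory construction on positively separated sets. -/
lemma carath_superadd {ζ : Set X → ℝ≥0∞} (hζ : ζ ∅ = 0) {S T : Set X} {r : ℝ≥0∞}
    (hr : 0 < r) (hrtop : r ≠ ∞) (hsep : ∀ x ∈ S, ∀ y ∈ T, r ≤ edist x y) :
    carath ζ S + carath ζ T ≤ carath ζ (S ∪ T) := by
  classical
  -- core splitting estimate at small scales
  have core : ∀ δ : ℝ≥0∞, 0 < δ → δ < r →
      covInf ζ δ S + covInf ζ δ T ≤ covInf ζ δ (S ∪ T) := by
    intro δ hδ hδr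
    refine le_iInf fun G => le_iInf fun hm => le_iInf fun hcov => le_iInf fun hdiam => ?_
    set GS : ℕ → Set X := fun i => if (G i ∩ S).Nonempty then G i else ∅ with hGS
    set GT : ℕ → Set X := fun i => if (G i ∩ T).Nonempty then G i else ∅ with hGT
    have hmS : ∀ i, MeasurableSet (GS i) := by
      intro i; simp only [hGS]; split_ifs <;> [exact hm i; exact MeasurableSet.empty]
    have hmT : ∀ i, MeasurableSet (GT i) := by
      intro i; simp only [hGT]; split_ifs <;> [exact hm i; exact MeasurableSet.empty]
    have hcovS : S ⊆ ⋃ i, GS i := by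
      intro x hx
      obtain ⟨i, hi⟩ := mem_iUnion.1 (hcov (Or.inl hx))
      have hne : (G i ∩ S).Nonempty := ⟨x, hi, hx⟩
      refine mem_iUnion.2 ⟨i, ?_⟩
      simp only [hGS, if_pos hne]; exact hi
    have hcovT : T ⊆ ⋃ i, GT i := by
      intro x hx
      obtain ⟨i, hi⟩ := mem_iUnion.1 (hcov (Or.inr hx))
      have hne : (G i ∩ T).Nonempty := ⟨x, hi, hx⟩
      refine mem_iUnion.2 ⟨i, ?_⟩
      simp only [hGT, if_pos hne]; exact hi
    have hdiamS : ∀ i, EMetric.diam (GS i) ≤ δ := by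
      intro i; simp only [hGS]; split_ifs with h
      · exact hdiam i
      · exact EMetric.diam_empty.le.trans zero_le
    have hdiamT : ∀ i, EMetric.diam (GT i) ≤ δ := by
      intro i; simp only [hGT]; split_ifs with h
      · exact hdiam i
      · exact EMetric.diam_empty.le.trans zero_le
    have hpoint : ∀ i, ζ (GS i) + ζ (GT i) ≤ ζ (G i) := by
      intro i
      by_cases hS : (G i ∩ S).Nonempty <;> by_cases hT : (G i ∩ T).Nonempty
      · exfalso
        obtain ⟨x, hxG, hxS⟩ := hS
        obtain ⟨y, hyG, hyT⟩ := hT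
        have h1 : r ≤ edist x y := hsep x hxS y hyT
        have h2 : edist x y ≤ EMetric.diam (G i) := EMetric.edist_le_diam_of_mem hxG hyG
        exact absurd ((h1.trans h2).trans (hdiam i)) (not_le.2 hδr)
      · simp only [hGS, hGT, if_pos hS, if_neg hT, hζ, add_zero]; exact le_rfl
      · simp only [hGS, hGT, if_neg hS, if_pos hT, hζ, zero_add]; exact le_rfl
      · simp only [hGS, hGT, if_neg hS, if_neg hT, hζ, add_zero]; exact zero_le
    calc covInf ζ δ S + covInf ζ δ T ≤ (∑' i, ζ (GS i)) + ∑' i, ζ (GT i) :=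
          add_le_add (covInf_le_of_cover hmS hcovS hdiamS)
            (covInf_le_of_cover hmT hcovT hdiamT)
      _ = ∑' i, (ζ (GS i) + ζ (GT i)) := (ENNReal.tsum_add).symm
      _ ≤ ∑' i, ζ (G i) := ENNReal.tsum_le_tsum hpoint
  -- combine the two suprema
  have hrewrite : ∀ E : Set X,
      carath ζ E = ⨆ d : {δ : ℝ≥0∞ // 0 < δ}, covInf ζ d.1 E := by
    intro E; rw [carath_eq_iSup, iSup_subtype]
  rw [hrewrite S, hrewrite T]
  rw [ENNReal.iSup_add_iSup (f := fun d : {δ : ℝ≥0∞ // 0 < δ} => covInf ζ d.1 S)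
    (g := fun d : {δ : ℝ≥0∞ // 0 < δ} => covInf ζ d.1 T) ?_]
  · refine iSup_le fun d => ?_
    set δ' : ℝ≥0∞ := min d.1 (r / 2) with hδ'
    have hδ'pos : 0 < δ' := lt_min d.2 (ENNReal.half_pos hr.ne')
    have hδ'r : δ' < r := (min_le_right _ _).trans_lt (ENNReal.half_lt_self hr.ne' hrtop)
    have h1 : covInf ζ d.1 S ≤ covInf ζ δ' S := covInf_anti (min_le_left _ _) S
    have h2 : covInf ζ d.1 T ≤ covInf ζ δ' T := covInf_anti (min_le_left _ _) T
    calc covInf ζ d.1 S + covInf ζ d.1 T ≤ covInf ζ δ' S + covInf ζ δ' T :=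
          add_le_add h1 h2
      _ ≤ covInf ζ δ' (S ∪ T) := core δ' hδ'pos hδ'r
      _ ≤ carath ζ (S ∪ T) := covInf_le_carath hδ'pos _
  · intro i j
    refine ⟨⟨min i.1 j.1, lt_min i.2 j.2⟩, ?_⟩
    exact add_le_add (covInf_anti (min_le_left _ _) S) (covInf_anti (min_le_right _ _) T)

/-- Finite superadditivity of the Carathéodory construction over pairwise disjoint
compact sets (in a metric space). -/
lemma carath_superadd_compacts {Y : Type*} [MetricSpace Y] [MeasurableSpace Y]
    {ζ : Set Y → ℝ≥0∞} (hζ : ζ ∅ = 0) (C : ℕ → Set Y) (hC : ∀ j, IsCompact (C j))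
    (hdisj : Pairwise (Function.onFun Disjoint C)) (J : ℕ) :
    ∑ j ∈ Finset.range J, carath ζ (C j) ≤ carath ζ (⋃ j ∈ Finset.range J, C j) := by
  induction J with
  | zero => simp
  | succ J ih =>
    have hUc : IsCompact (⋃ j ∈ Finset.range J, C j) :=
      (Finset.range J).isCompact_biUnion fun j _ => hC j
    have hUdisj : Disjoint (C J) (⋃ j ∈ Finset.range J, C j) := by
      refine Set.disjoint_iUnion₂_right.2 fun j hj => ?_
      exact hdisj (Finset.mem_range.1 hj).ne'
    obtain ⟨r, hr, hlt⟩ := EMetric.exists_pos_forall_lt_edist (hC J) hUc.isClosed hUdisj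
    have hsep := carath_superadd (S := C J) (T := ⋃ j ∈ Finset.range J, C j) hζ
      (r := (r : ℝ≥0∞)) (by exact_mod_cast hr) ENNReal.coe_ne_top
      (fun x hx y hy => (hlt x hx y hy).le)
    have hunion : C J ∪ ⋃ j ∈ Finset.range J, C j = ⋃ j ∈ Finset.range (J + 1), C j := by
      rw [Finset.range_add_one]
      simp [Set.biUnion_insert]
    calc ∑ j ∈ Finset.range (J + 1), carath ζ (C j)
        = (∑ j ∈ Finset.range J, carath ζ (C j)) + carath ζ (C J) :=
          Finset.sum_range_succ _ _
      _ ≤ carath ζ (⋃ j ∈ Finset.range J, C j) + carath ζ (C J) := by gcongr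
      _ = carath ζ (C J) + carath ζ (⋃ j ∈ Finset.range J, C j) := add_comm _ _
      _ ≤ carath ζ (C J ∪ ⋃ j ∈ Finset.range J, C j) := hsep
      _ = carath ζ (⋃ j ∈ Finset.range (J + 1), C j) := by rw [hunion]

end CarathAux

/-- A countable measurable partition of `ℝˡ` into sets of diameter at most `d`. -/
lemma exists_partition_diam_le (l : ℕ) {d : ℝ} (hd : 0 < d) :
    ∃ P : ℕ → Set (Euc l), (∀ j, MeasurableSet (P j)) ∧
      Pairwise (Function.onFun Disjoint P) ∧ (⋃ j, P j) = Set.univ ∧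
      ∀ j, EMetric.diam (P j) ≤ ENNReal.ofReal d := by
  classical
  set d' : ℝ := d / (l + 1) with hd'def
  have hd' : 0 < d' := by positivity
  set Q : (Fin l → ℤ) → Set (Euc l) := fun z => {x | ∀ i, z i = ⌊x i / d'⌋} with hQ
  have hQmeas : ∀ z, MeasurableSet (Q z) := by
    intro z
    have : Q z = ⋂ i, (fun x : Euc l => x i) ⁻¹' {t : ℝ | z i = ⌊t / d'⌋} := by
      ext x; simp [hQ, Set.mem_iInter]
    rw [this]
    refine MeasurableSet.iInter fun i => ?_
    have hcoord : Measurable fun x : Euc l => x i := by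
      exact (EuclideanSpace.proj (𝕜 := ℝ) i).continuous.measurable
    refine hcoord ?_
    have : {t : ℝ | z i = ⌊t / d'⌋} = (fun t : ℝ => ⌊t / d'⌋) ⁻¹' {z i} := by
      ext t; simp [eq_comm]
    rw [this]
    exact (Int.measurable_floor.comp (measurable_id.div_const d')) (measurableSet_singleton _)
  have hQdiam : ∀ z, EMetric.diam (Q z) ≤ ENNReal.ofReal d := by
    intro z
    refine EMetric.diam_le fun x hx y hy => ?_
    rw [edist_dist]
    refine ENNReal.ofReal_le_ofReal ?_
    have hcoordb : ∀ i, dist (x i) (y i) ≤ d' := by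
      intro i
      have hx' : (z i : ℝ) * d' ≤ x i ∧ x i < ((z i : ℝ) + 1) * d' := by
        have h1 : (z i : ℝ) ≤ x i / d' := (hx i) ▸ Int.floor_le _
        have h2 : x i / d' < (z i : ℝ) + 1 := by
          rw [hx i]; exact Int.lt_floor_add_one _
        constructor
        · calc (z i : ℝ) * d' ≤ (x i / d') * d' := by nlinarith
            _ = x i := by field_simp
        · calc x i = (x i / d') * d' := by field_simp
            _ < ((z i : ℝ) + 1) * d' := by nlinarith
      have hy' : (z i : ℝ) * d' ≤ y i ∧ y i < ((z i : ℝ) + 1) * d' := by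
        have h1 : (z i : ℝ) ≤ y i / d' := (hy i) ▸ Int.floor_le _
        have h2 : y i / d' < (z i : ℝ) + 1 := by
          rw [hy i]; exact Int.lt_floor_add_one _
        constructor
        · calc (z i : ℝ) * d' ≤ (y i / d') * d' := by nlinarith
            _ = y i := by field_simp
        · calc y i = (y i / d') * d' := by field_simp
            _ < ((z i : ℝ) + 1) * d' := by nlinarith
      rw [Real.dist_eq]
      rw [abs_le]
      constructor <;> nlinarith [hx'.1, hx'.2, hy'.1, hy'.2]
    have hsum : ∑ i, dist (x i) (y i) ^ 2 ≤ (l : ℝ) * d' ^ 2 := by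
      calc ∑ i, dist (x i) (y i) ^ 2 ≤ ∑ _i : Fin l, d' ^ 2 := by
            refine Finset.sum_le_sum fun i _ => ?_
            have := hcoordb i
            nlinarith [dist_nonneg (x := x i) (y := y i)]
        _ = (l : ℝ) * d' ^ 2 := by simp [Finset.sum_const, Finset.card_univ]
    calc dist x y = Real.sqrt (∑ i, dist (x i) (y i) ^ 2) := EuclideanSpace.dist_eq x y
      _ ≤ Real.sqrt ((l : ℝ) * d' ^ 2) := Real.sqrt_le_sqrt hsum
      _ ≤ Real.sqrt (((l : ℝ) + 1) ^ 2 * d' ^ 2) := by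
          refine Real.sqrt_le_sqrt ?_
          have : (l : ℝ) ≤ ((l : ℝ) + 1) ^ 2 := by nlinarith [Nat.cast_nonneg (α := ℝ) l]
          nlinarith [sq_nonneg d']
      _ = ((l : ℝ) + 1) * d' := by
          rw [← mul_pow, Real.sqrt_sq (by positivity)]
      _ = d := by rw [hd'def]; field_simp
  obtain ⟨f, hf⟩ := exists_surjective_nat (Fin l → ℤ)
  refine ⟨disjointed fun j => Q (f j), fun j => MeasurableSet.disjointed (fun j => hQmeas _) j,
    disjoint_disjointed _, ?_, fun j => ?_⟩
  · rw [iUnion_disjointed]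
    refine Set.eq_univ_of_forall fun x => ?_
    obtain ⟨j, hj⟩ := hf fun i => ⌊x i / d'⌋
    exact Set.mem_iUnion.2 ⟨j, by rw [hj]; intro i; rfl⟩
  · exact (EMetric.diam_mono (disjointed_subset _ _)).trans (hQdiam _)

/-- The exponent `1/q` where `q` is the conjugate exponent of `p`. -/
def rExp (p : ℝ≥0∞) : ℝ := if p = ∞ then 1 else 1 - 1 / p.toReal

lemma rExp_pos {p : ℝ≥0∞} (hp : 1 < p) : 0 < rExp p := by
  rw [rExp]
  split_ifs with h
  · exact one_pos
  · have hpr : 1 < p.toReal := by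
      rw [← ENNReal.toReal_one]
      exact (ENNReal.toReal_lt_toReal (by simp) h).2 hp
    have : 1 / p.toReal < 1 := by
      rw [div_lt_one (by linarith)]; linarith
    linarith

lemma rExp_nonneg {p : ℝ≥0∞} (hp : 1 < p) : 0 ≤ rExp p := (rExp_pos hp).le

section Holder

variable {n l : ℕ} {Λ : Set (Euc l)} {μ : Euc l → Measure (Euc n)} {p : ℝ≥0∞}

/-- A measurable everywhere-majorant of `λ ↦ μ_λ(B)` whose integrals over small sets
satisfy the Hölder bound against `ζ_p(B)`. -/
lemma exists_majorant (hΛ : MeasurableSet Λ) (hμ : MeasurableFamily Λ μ) (hp : 1 < p)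
    {B : Set (Euc n)} (hB : MeasurableSet B) :
    ∃ g : Euc l → ℝ≥0∞, Measurable g ∧ (∀ a, μ a B ≤ g a) ∧
      ∀ V : Set (Euc l), MeasurableSet V →
        ∫⁻ a, V.indicator g a ∂(volume.restrict Λ) ≤
          zetaP Λ μ p B * (volume (V ∩ Λ)) ^ rExp p := by
  classical
  set ρ := volume.restrict Λ with hρ
  have hf := hμ B hB
  set g₀ := hf.mk _ with hg₀def
  have hg₀m : Measurable g₀ := hf.measurable_mk
  have hae : (fun lam => μ lam B) =ᵐ[ρ] g₀ := hf.ae_eq_mk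
  have hnull : ρ {a | ¬ μ a B = g₀ a} = 0 := ae_iff.1 hae
  obtain ⟨N, hNsub, hNm, hN0⟩ := exists_measurable_superset_of_null hnull
  set g : Euc l → ℝ≥0∞ := fun a => g₀ a + N.indicator (fun _ => (∞ : ℝ≥0∞)) a with hgdef
  have hgm : Measurable g := hg₀m.add (measurable_const.indicator hNm)
  refine ⟨g, hgm, ?_, ?_⟩
  · intro a
    by_cases ha : a ∈ N
    · simp [hgdef, Set.indicator_of_mem ha]
    · have : μ a B = g₀ a := by
        by_contra hne
        exact ha (hNsub hne)
      simp [hgdef, Set.indicator_of_notMem ha, this]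
  · intro V hV
    -- the `∞`-part integrates to `0`
    have hsplit : ∫⁻ a, V.indicator g a ∂ρ ≤ ∫⁻ a, V.indicator g₀ a ∂ρ := by
      have h1 : ∀ a, V.indicator g a ≤
          V.indicator g₀ a + N.indicator (fun _ => (∞ : ℝ≥0∞)) a := by
        intro a
        by_cases ha : a ∈ V
        · simp only [Set.indicator_of_mem ha, hgdef]
          exact add_le_add le_rfl (le_refl _)
        · simp [Set.indicator_of_notMem ha]
      calc ∫⁻ a, V.indicator g a ∂ρ
          ≤ ∫⁻ a, (V.indicator g₀ a + N.indicator (fun _ => (∞ : ℝ≥0∞)) a) ∂ρ :=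
            lintegral_mono h1
        _ = (∫⁻ a, V.indicator g₀ a ∂ρ) + ∫⁻ a, N.indicator (fun _ => (∞ : ℝ≥0∞)) a ∂ρ :=
            lintegral_add_left (hg₀m.indicator hV) _
        _ = (∫⁻ a, V.indicator g₀ a ∂ρ) + ∞ * ρ N := by
            rw [lintegral_indicator hNm, setLIntegral_const]
        _ = ∫⁻ a, V.indicator g₀ a ∂ρ := by rw [hN0, mul_zero, add_zero]
    refine hsplit.trans ?_
    have hρV : ρ V = volume (V ∩ Λ) := Measure.restrict_apply hV
    by_cases hptop : p = ∞
    · -- `p = ∞`: use the essential supremum bound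
      have hress : zetaP Λ μ p B = essSup g₀ ρ := by
        rw [zetaP, lpNormENN, if_pos hptop]
        exact essSup_congr_ae hae
      have hrexp : rExp p = 1 := by rw [rExp, if_pos hptop]
      have hbound : ∀ᵐ a ∂ρ, V.indicator g₀ a ≤
          V.indicator (fun _ => essSup g₀ ρ) a := by
        filter_upwards [ENNReal.ae_le_essSup g₀] with a ha
        by_cases hav : a ∈ V <;> simp [Set.indicator_of_mem, Set.indicator_of_notMem, hav, ha]
      calc ∫⁻ a, V.indicator g₀ a ∂ρ
          ≤ ∫⁻ a, V.indicator (fun _ => essSup g₀ ρ) a ∂ρ := lintegral_mono_ae hbound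
        _ = essSup g₀ ρ * ρ V := by rw [lintegral_indicator hV, setLIntegral_const]
        _ = zetaP Λ μ p B * volume (V ∩ Λ) ^ rExp p := by
            rw [hress, hρV, hrexp, ENNReal.rpow_one]
    · -- `1 < p < ∞`: Hölder's inequality
      have hpr : 1 < p.toReal := by
        rw [← ENNReal.toReal_one]
        exact (ENNReal.toReal_lt_toReal (by simp) hptop).2 hp
      set pr := p.toReal with hprdef
      have hpq : pr.HolderConjugate pr.conjExponent := Real.HolderConjugate.conjExponent hpr
      set qr := pr.conjExponent with hqrdef
      have hqr0 : 0 < qr := hpq.symm.pos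
      have hrexp : rExp p = 1 / qr := by
        rw [rExp, if_neg hptop]
        have := hpq.inv_add_inv_eq_one
        rw [one_div, one_div, ← hprdef]
        linarith [this]
      have key := ENNReal.lintegral_mul_le_Lp_mul_Lq ρ hpq hg₀m.aemeasurable
        ((measurable_one.indicator hV).aemeasurable :
          AEMeasurable (V.indicator (fun _ => (1 : ℝ≥0∞))) ρ)
      have hlhs : (fun a => (g₀ * V.indicator fun _ => (1:ℝ≥0∞)) a) = fun a =>
          V.indicator g₀ a := by
        funext a
        by_cases hav : a ∈ V <;>
          simp [Set.indicator_of_mem, Set.indicator_of_notMem, hav]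
      have hg1 : (∫⁻ a, (V.indicator (fun _ => (1:ℝ≥0∞))) a ^ qr ∂ρ) = ρ V := by
        have : ∀ a, (V.indicator (fun _ => (1:ℝ≥0∞))) a ^ qr =
            V.indicator (fun _ => (1:ℝ≥0∞)) a := by
          intro a
          by_cases hav : a ∈ V <;>
            simp [Set.indicator_of_mem, Set.indicator_of_notMem, hav,
              ENNReal.one_rpow, ENNReal.zero_rpow_of_pos hqr0]
        rw [funext this, lintegral_indicator hV, setLIntegral_const, one_mul]
      have hzeta : (∫⁻ a, g₀ a ^ pr ∂ρ) ^ (1 / pr) = zetaP Λ μ p B := by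
        rw [zetaP, lpNormENN, if_neg hptop]
        congr 1
        refine lintegral_congr_ae ?_
        filter_upwards [hae] with a ha
        rw [ha]
      calc ∫⁻ a, V.indicator g₀ a ∂ρ
          = ∫⁻ a, (g₀ * V.indicator fun _ => (1:ℝ≥0∞)) a ∂ρ := by rw [hlhs]
        _ ≤ (∫⁻ a, g₀ a ^ pr ∂ρ) ^ (1 / pr) *
            (∫⁻ a, (V.indicator (fun _ => (1:ℝ≥0∞))) a ^ qr ∂ρ) ^ (1 / qr) := key
        _ = zetaP Λ μ p B * volume (V ∩ Λ) ^ rExp p := by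
            rw [hzeta, hg1, hρV, hrexp]

lemma zetaHat_prod_le {B : Set (Euc n)} {W : Set (Euc l)} (hW : MeasurableSet W)
    {g : Euc l → ℝ≥0∞} (hg : Measurable g) (hmaj : ∀ a, μ a B ≤ g a) :
    zetaHat Λ μ (B ×ˢ W) ≤ ∫⁻ a, W.indicator g a ∂(volume.restrict Λ) := by
  rw [zetaHat, upperLintegral]
  refine iInf_le_of_le (W.indicator g)
    (iInf_le_of_le (hg.indicator hW) (iInf_le_of_le ?_ le_rfl))
  intro a
  by_cases ha : a ∈ W
  · have hset : {x | (x, a) ∈ B ×ˢ W} = B := by ext x; simp [ha]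
    rw [hset, Set.indicator_of_mem ha]; exact hmaj a
  · have hset : {x | (x, a) ∈ B ×ˢ W} = (∅ : Set (Euc n)) := by ext x; simp [ha]
    rw [hset, Set.indicator_of_notMem ha]; simp

/-- The key Hölder estimate: `𝓘̂(C × V) ≤ 𝓘ᵖ(C) · |V ∩ Λ|^{1/q}`. -/
lemma hatIG_prod_le (hΛ : MeasurableSet Λ) (hμ : MeasurableFamily Λ μ) (hp : 1 < p)
    (C : Set (Euc n)) {V : Set (Euc l)} (hV : MeasurableSet V)
    (hCfin : carath (zetaP Λ μ p) C ≠ ∞) (hVfin : volume (V ∩ Λ) ≠ ∞) :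
    hatIG Λ μ (C ×ˢ V) ≤ carath (zetaP Λ μ p) C * volume (V ∩ Λ) ^ rExp p := by
  classical
  set c := volume (V ∩ Λ) ^ rExp p with hcdef
  have hc_ne_top : c ≠ ∞ := ENNReal.rpow_ne_top_of_nonneg (rExp_nonneg hp) hVfin
  have main : ∀ δ : ℝ≥0∞, 0 < δ → ∀ γ : ℝ≥0∞, 0 < γ →
      covInf (zetaHat Λ μ) δ (C ×ˢ V) ≤ (carath (zetaP Λ μ p) C + γ) * c := by
    intro δ hδ γ hγ
    -- a near-optimal measurable `δ`-cover of `C`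
    have h1 : covInf (zetaP Λ μ p) δ C < carath (zetaP Λ μ p) C + γ :=
      lt_of_le_of_lt (covInf_le_carath hδ C) (ENNReal.lt_add_right hCfin hγ.ne')
    rw [covInf] at h1
    simp only [iInf_lt_iff] at h1
    obtain ⟨G, hGm, hGcov, hGdiam, hGsum⟩ := h1
    -- a real scale `d ≤ δ`
    obtain ⟨d, hd0, hdle⟩ : ∃ d : ℝ, 0 < d ∧ ENNReal.ofReal d ≤ δ := by
      rcases eq_or_ne δ ∞ with hδtop | hδtop
      · exact ⟨1, one_pos, by simp [hδtop]⟩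
      · exact ⟨δ.toReal, ENNReal.toReal_pos hδ.ne' hδtop,
          by rw [ENNReal.ofReal_toReal hδtop]⟩
    obtain ⟨P, hPm, hPdisj, hPunion, hPdiam⟩ := exists_partition_diam_le l hd0
    choose g hgm hgmaj hgint using fun i => exists_majorant hΛ hμ hp (hGm i)
    set e : ℕ ≃ ℕ × ℕ := (Denumerable.eqv (ℕ × ℕ)).symm with hedef
    set H : ℕ → Set (Euc n × Euc l) := fun k => G (e k).1 ×ˢ (P (e k).2 ∩ V) with hHdef
    have hHm : ∀ k, MeasurableSet (H k) := fun k => (hGm _).prod ((hPm _).inter hV)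
    have hHcov : C ×ˢ V ⊆ ⋃ k, H k := by
      rintro ⟨x, a⟩ ⟨hx, ha⟩
      obtain ⟨i, hi⟩ := mem_iUnion.1 (hGcov hx)
      have haP : a ∈ ⋃ j, P j := hPunion.symm ▸ Set.mem_univ a
      obtain ⟨j, hj⟩ := mem_iUnion.1 haP
      refine mem_iUnion.2 ⟨e.symm (i, j), ?_⟩
      simp only [hHdef, Equiv.apply_symm_apply]
      exact ⟨hi, hj, ha⟩
    have hHdiam : ∀ k, EMetric.diam (H k) ≤ δ := by
      intro k
      refine EMetric.diam_le ?_
      rintro ⟨x, a⟩ ⟨hx, ha⟩ ⟨y, b⟩ ⟨hy, hb⟩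
      rw [Prod.edist_eq]
      refine max_le ?_ ?_
      · exact (EMetric.edist_le_diam_of_mem hx hy).trans (hGdiam _)
      · refine (EMetric.edist_le_diam_of_mem ha hb).trans ?_
        exact (EMetric.diam_mono Set.inter_subset_left).trans ((hPdiam _).trans hdle)
    calc covInf (zetaHat Λ μ) δ (C ×ˢ V) ≤ ∑' k, zetaHat Λ μ (H k) :=
          covInf_le_of_cover hHm hHcov hHdiam
      _ = ∑' ij : ℕ × ℕ, zetaHat Λ μ (G ij.1 ×ˢ (P ij.2 ∩ V)) := by
          rw [← e.tsum_eq (fun ij : ℕ × ℕ => zetaHat Λ μ (G ij.1 ×ˢ (P ij.2 ∩ V)))]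
      _ = ∑' i, ∑' j, zetaHat Λ μ (G i ×ˢ (P j ∩ V)) :=
          ENNReal.tsum_prod (f := fun i j => zetaHat Λ μ (G i ×ˢ (P j ∩ V)))
      _ ≤ ∑' i, zetaP Λ μ p (G i) * c := by
          refine ENNReal.tsum_le_tsum fun i => ?_
          calc ∑' j, zetaHat Λ μ (G i ×ˢ (P j ∩ V))
              ≤ ∑' j, ∫⁻ a, (P j ∩ V).indicator (g i) a ∂(volume.restrict Λ) :=
                ENNReal.tsum_le_tsum fun j =>
                  zetaHat_prod_le ((hPm j).inter hV) (hgm i) (hgmaj i)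
            _ = ∫⁻ a, ∑' j, (P j ∩ V).indicator (g i) a ∂(volume.restrict Λ) :=
                (lintegral_tsum fun j =>
                  ((hgm i).indicator ((hPm j).inter hV)).aemeasurable).symm
            _ = ∫⁻ a, V.indicator (g i) a ∂(volume.restrict Λ) := by
                refine lintegral_congr fun a => ?_
                by_cases haV : a ∈ V
                · have haP : a ∈ ⋃ j, P j := hPunion.symm ▸ Set.mem_univ a
                  obtain ⟨j₀, hj₀⟩ := mem_iUnion.1 haP
                  have hz : ∀ j, j ≠ j₀ → (P j ∩ V).indicator (g i) a = 0 := by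
                    intro j hj
                    refine Set.indicator_of_notMem (fun hmem => ?_) _
                    exact Set.disjoint_left.1 (hPdisj hj) hmem.1 hj₀
                  rw [Set.indicator_of_mem haV, tsum_eq_single j₀ hz,
                    Set.indicator_of_mem (Set.mem_inter hj₀ haV)]
                · rw [Set.indicator_of_notMem haV]
                  refine ENNReal.tsum_eq_zero.2 fun j => ?_
                  exact Set.indicator_of_notMem (fun hmem => haV hmem.2) _
            _ ≤ zetaP Λ μ p (G i) * volume (V ∩ Λ) ^ rExp p := hgint i V hV
      _ = (∑' i, zetaP Λ μ p (G i)) * c := ENNReal.tsum_mul_right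
      _ ≤ (carath (zetaP Λ μ p) C + γ) * c := mul_le_mul_left hGsum.le _
  -- conclude
  show carath (zetaHat Λ μ) (C ×ˢ V) ≤ carath (zetaP Λ μ p) C * c
  rw [carath_eq_iSup]
  refine iSup₂_le fun δ hδ => ?_
  by_cases hc0 : c = 0
  · have := main δ hδ 1 one_pos
    rw [hc0, mul_zero] at this ⊢
    exact this
  · refine ENNReal.le_of_forall_pos_le_add fun ε hε hb => ?_
    have hγ : (0 : ℝ≥0∞) < (ε : ℝ≥0∞) / c :=
      ENNReal.div_pos (by exact_mod_cast hε.ne') hc_ne_top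
    calc covInf (zetaHat Λ μ) δ (C ×ˢ V)
        ≤ (carath (zetaP Λ μ p) C + (ε : ℝ≥0∞) / c) * c := main δ hδ _ hγ
      _ = carath (zetaP Λ μ p) C * c + (ε : ℝ≥0∞) / c * c := by rw [add_mul]
      _ = carath (zetaP Λ μ p) C * c + ε := by
          rw [ENNReal.div_mul_cancel hc0 hc_ne_top]

end Holder

/-- Proposition 4.7: if `𝓘^m_p` is finite for some `p > 1`, then
any disintegration `(η_x)` of `𝓘̂_m` over `π_{1♯}𝓘̂_m` satisfies `η_x ≪ L^l` for
`π_{1♯}𝓘̂_m`-a.e. `x`. -/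
theorem disintegration_absolutely_continuous
    {n l : ℕ} (hn : 1 ≤ n)
    (Λ : Set (Euc l)) (hΛo : IsOpen Λ) (hΛb : Bornology.IsBounded Λ)
    (μ : Euc l → Measure (Euc n)) (hμ : MeasurableFamily Λ μ)
    (p : ℝ≥0∞) (hp : 1 < p) (hfin : genIGMeasure Λ μ p Set.univ < ∞)
    (ν : Measure (Euc n))
    (hν : ∀ E : Set (Euc n), MeasurableSet E →
      ν E = hatIG Λ μ (E ×ˢ (Set.univ : Set (Euc l))))
    (η : Euc n → Measure (Euc l)) (hηfin : ∀ x, IsFiniteMeasure (η x))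
    (hηΛ : ∀ x, η x Λᶜ = 0)
    (hηmeas : ∀ U : Set (Euc l), MeasurableSet U → Measurable fun x => η x U)
    (hdis : ∀ A : Set (Euc n × Euc l), MeasurableSet A →
      hatIG Λ μ A = ∫⁻ x, η x {lam | (x, lam) ∈ A} ∂ν) :
    ∀ᵐ x ∂ν, η x ≪ volume := by
  classical
  have hΛm : MeasurableSet Λ := hΛo.measurableSet
  set ζp := zetaP Λ μ p with hζpdef
  have hM : carath ζp Set.univ ≠ ∞ := hfin.ne
  have hζp0 : ζp ∅ = 0 := by
    have hpr : 0 < p.toReal ∨ p = ∞ := by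
      rcases eq_or_ne p ∞ with h | h
      · exact Or.inr h
      · refine Or.inl ?_
        have : 1 < p.toReal := by
          rw [← ENNReal.toReal_one]
          exact (ENNReal.toReal_lt_toReal (by simp) h).2 hp
        linarith
    rw [hζpdef, zetaP, lpNormENN]
    split_ifs with h
    · simp only [measure_empty, ENNReal.essSup_eq_zero_iff]
      exact Filter.Eventually.of_forall fun _ => rfl
    · rcases hpr with hpr | hpr
      · simp only [measure_empty]
        rw [funext fun a => ENNReal.zero_rpow_of_pos hpr]
        simp [ENNReal.zero_rpow_of_pos, one_div, inv_pos, hpr]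
      · exact absurd hpr h
  have hΛvol : volume Λ ≠ ∞ := hΛb.measure_lt_top.ne
  have hrpos := rExp_pos hp
  -- ν is a finite measure
  have hν_univ : ν Set.univ ≠ ∞ := by
    rw [hν Set.univ MeasurableSet.univ]
    refine ne_top_of_le_ne_top ?_ (hatIG_prod_le hΛm hμ hp Set.univ MeasurableSet.univ hM
      (by rwa [Set.univ_inter]))
    exact ENNReal.mul_ne_top hM (ENNReal.rpow_ne_top_of_nonneg (rExp_nonneg hp)
      (by rwa [Set.univ_inter]))
  haveI : IsFiniteMeasure ν := ⟨lt_top_iff_ne_top.2 hν_univ⟩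
  -- a countable basis of balls and the family of their finite unions
  have hcs : DenseRange (TopologicalSpace.denseSeq (Euc l)) :=
    TopologicalSpace.denseRange_denseSeq _
  set cs := TopologicalSpace.denseSeq (Euc l) with hcsdef
  set qe : ℕ → ℚ := fun j => (Denumerable.eqv ℚ).symm j with hqedef
  have hqe_surj : Function.Surjective qe := (Denumerable.eqv ℚ).symm.surjective
  set base : ℕ × ℕ → Set (Euc l) := fun ij =>
    if 0 < (qe ij.2 : ℝ) then Metric.ball (cs ij.1) (qe ij.2) else ∅ with hbasedef
  have hbase_meas : ∀ ij, MeasurableSet (base ij) := by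
    intro ij
    by_cases hq : 0 < (qe ij.2 : ℝ)
    · simp only [hbasedef]; rw [if_pos hq]; exact measurableSet_ball
    · simp only [hbasedef]; rw [if_neg hq]; exact MeasurableSet.empty
  have hbase_sub : ∀ U : Set (Euc l), IsOpen U → ∀ x ∈ U,
      ∃ ij, base ij ⊆ U ∧ x ∈ base ij := by
    intro U hU x hx
    obtain ⟨ρ₀, hρ₀, hball⟩ := Metric.isOpen_iff.1 hU x hx
    obtain ⟨sq, hsq1, hsq2⟩ := exists_rat_btwn (show ρ₀ / 4 < ρ₀ / 2 by linarith)
    obtain ⟨j, hj⟩ := hqe_surj sq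
    obtain ⟨i, hi⟩ := hcs.exists_dist_lt x (show 0 < ρ₀ / 4 by linarith)
    have hsqpos : 0 < (qe j : ℝ) := by rw [hj]; linarith
    refine ⟨(i, j), ?_, ?_⟩
    · simp only [hbasedef]
      rw [if_pos hsqpos]
      intro y hy
      refine hball ?_
      have h1 : dist y (cs i) < (qe j : ℝ) := Metric.mem_ball.1 hy
      have h2 : dist (cs i) x < ρ₀ / 4 := by
        rw [dist_comm]; exact hi
      have : dist y x < ρ₀ := by
        calc dist y x ≤ dist y (cs i) + dist (cs i) x := dist_triangle _ _ _
          _ < (qe j : ℝ) + ρ₀ / 4 := add_lt_add h1 h2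
          _ < ρ₀ / 2 + ρ₀ / 4 := by rw [hj]; linarith
          _ ≤ ρ₀ := by linarith
      exact Metric.mem_ball.2 this
    · simp only [hbasedef]
      rw [if_pos hsqpos]
      refine Metric.mem_ball.2 ?_
      calc dist x (cs i) < ρ₀ / 4 := hi
        _ < (qe j : ℝ) := by rw [hj]; linarith
  obtain ⟨FS, hFS⟩ := exists_surjective_nat (Finset (ℕ × ℕ))
  set VV : ℕ → Set (Euc l) := fun mm => ⋃ ij ∈ FS mm, base ij with hVVdef
  have hVVm : ∀ mm, MeasurableSet (VV mm) :=
    fun mm => (FS mm).measurableSet_biUnion fun ij _ => hbase_meas ij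
  -- inner approximation of open sets by the `VV`s
  have hopen_approx : ∀ (x : Euc n) (U : Set (Euc l)), IsOpen U → ∀ θ : ℝ≥0∞,
      θ ≠ 0 → θ ≠ ∞ → θ ≤ η x U → ∃ mm, VV mm ⊆ U ∧ θ / 2 < η x (VV mm) := by
    intro x U hU θ hθ0 hθtop hθU
    set ee : ℕ ≃ ℕ × ℕ := (Denumerable.eqv (ℕ × ℕ)).symm with heedef
    set W : ℕ → Set (Euc l) := fun k => if base (ee k) ⊆ U then base (ee k) else ∅ with hWdef
    set A : ℕ → Set (Euc l) := fun nn => ⋃ k ∈ Finset.range nn, W k with hAdef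
    have hWU : ∀ k, W k ⊆ U := by
      intro k; simp only [hWdef]
      split_ifs with h
      · exact h
      · exact Set.empty_subset U
    have hAU : ∀ nn, A nn ⊆ U := fun nn => Set.iUnion₂_subset fun k _ => hWU k
    have hAmono : Monotone A := fun a b hab =>
      Set.biUnion_subset_biUnion_left (Finset.range_subset_range.2 hab)
    have hunionA : ⋃ nn, A nn = U := by
      refine Set.Subset.antisymm (Set.iUnion_subset hAU) fun y hy => ?_
      obtain ⟨ij, hijU, hijy⟩ := hbase_sub U hU y hy
      refine Set.mem_iUnion.2 ⟨ee.symm ij + 1, ?_⟩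
      refine Set.mem_biUnion (Finset.self_mem_range_succ _) ?_
      simp only [hWdef, Equiv.apply_symm_apply]
      rw [if_pos hijU]
      exact hijy
    have hη : θ ≤ ⨆ nn, η x (A nn) := by
      rw [← (hAmono.directed_le).measure_iUnion, hunionA]
      exact hθU
    have h2 : θ / 2 < ⨆ nn, η x (A nn) :=
      lt_of_lt_of_le (ENNReal.half_lt_self hθ0 hθtop) hη
    obtain ⟨nn, hnn⟩ := lt_iSup_iff.1 h2
    -- `A nn` is one of the `VV`s
    set J : Finset (ℕ × ℕ) :=
      ((Finset.range nn).filter fun k => base (ee k) ⊆ U).image ee with hJdef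
    have hAJ : A nn = ⋃ ij ∈ J, base ij := by
      ext y
      simp only [hAdef, hJdef, Set.mem_iUnion, Finset.mem_image, Finset.mem_filter,
        Finset.mem_range, exists_prop]
      constructor
      · rintro ⟨k, hk, hy⟩
        simp only [hWdef] at hy
        by_cases hsub : base (ee k) ⊆ U
        · rw [if_pos hsub] at hy
          exact ⟨ee k, ⟨k, ⟨hk, hsub⟩, rfl⟩, hy⟩
        · rw [if_neg hsub] at hy
          exact absurd hy (Set.notMem_empty y)
      · rintro ⟨ij, ⟨k, ⟨hk, hsub⟩, rfl⟩, hy⟩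
        refine ⟨k, hk, ?_⟩
        simp only [hWdef]
        rw [if_pos hsub]
        exact hy
    obtain ⟨mm, hmm⟩ := hFS J
    refine ⟨mm, ?_, ?_⟩
    · simp only [hVVdef]
      rw [hmm, ← hAJ]
      exact hAU nn
    · simp only [hVVdef]
      rw [hmm, ← hAJ]
      exact hnn
  -- the function measuring failure of absolute continuity
  set F : Euc n → ℝ≥0∞ := fun x => ⨅ k : ℕ, ⨆ mm : ℕ,
    (if volume (VV mm) ≤ (2⁻¹ : ℝ≥0∞) ^ k then η x (VV mm) else 0) with hFdef
  have hFmeas : Measurable F := by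
    refine Measurable.iInf fun k => Measurable.iSup fun mm => ?_
    split_ifs with h
    · exact hηmeas _ (hVVm mm)
    · exact measurable_const
  -- points where `η x` is not absolutely continuous have `F x > 0`
  have hbad : {x | ¬ η x ≪ volume} ⊆ {x | 0 < F x} := by
    intro x hx
    simp only [Set.mem_setOf_eq] at hx ⊢
    have hx' : ¬ ∀ s, MeasurableSet s → volume s = 0 → η x s = 0 := fun h =>
      hx (Measure.AbsolutelyContinuous.mk h)
    push_neg at hx'
    obtain ⟨N, hNm, hN0, hNη⟩ := hx'
    set θ : ℝ≥0∞ := min (η x N) 1 with hθdef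
    have hθ0 : θ ≠ 0 := by
      simp only [hθdef, ne_eq, min_eq_iff]
      rintro (⟨h1, -⟩ | ⟨h1, -⟩)
      · exact hNη h1
      · exact one_ne_zero h1
    have hθtop : θ ≠ ∞ := ne_top_of_le_ne_top ENNReal.one_ne_top (min_le_right _ _)
    have hθ2 : 0 < θ / 2 := ENNReal.half_pos hθ0
    refine lt_of_lt_of_le hθ2 (le_iInf fun k => ?_)
    have h2k : (0 : ℝ≥0∞) < 2⁻¹ ^ k :=
      pos_iff_ne_zero.2 (ENNReal.pow_ne_zero (by simp) k)
    obtain ⟨U, hNU, hUopen, hUvol⟩ := Set.exists_isOpen_lt_of_lt N _ (hN0 ▸ h2k)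
    have hθU : θ ≤ η x U := le_trans (min_le_left _ _) (measure_mono hNU)
    obtain ⟨mm, hmmU, hmmθ⟩ := hopen_approx x U hUopen θ hθ0 hθtop hθU
    refine le_trans ?_ (le_iSup _ mm)
    rw [if_pos (le_of_lt (lt_of_le_of_lt (measure_mono hmmU) hUvol))]
    exact hmmθ.le
  -- the main estimate
  have hclaim : ∀ θ : ℝ≥0∞, 0 < θ → θ ≠ ∞ → ν {x | θ ≤ F x} = 0 := by
    intro θ hθ0 hθtop
    set K := {x | θ ≤ F x} with hKdef
    have hKm : MeasurableSet K := measurableSet_le measurable_const hFmeas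
    have hθ2ne0 : θ / 2 ≠ 0 := (ENNReal.half_pos hθ0.ne').ne'
    have hθ2netop : θ / 2 ≠ ∞ := (ENNReal.div_lt_top hθtop (by norm_num)).ne
    have main : ∀ (k : ℕ) (s : ℝ≥0∞), 0 < s → s ≠ ∞ →
        θ / 2 * ν K ≤ carath ζp Set.univ * ((2⁻¹ : ℝ≥0∞) ^ k) ^ rExp p + θ / 2 * s := by
      intro k s hs0 hstop
      set εk : ℝ≥0∞ := (2⁻¹ : ℝ≥0∞) ^ k with hεkdef
      set Gm : ℕ → Set (Euc n) := fun mm =>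
        if volume (VV mm) ≤ εk then {x | θ / 2 < η x (VV mm)} else ∅ with hGmdef
      have hGmm : ∀ mm, MeasurableSet (Gm mm) := by
        intro mm; simp only [hGmdef]
        split_ifs
        · exact measurableSet_lt measurable_const (hηmeas _ (hVVm mm))
        · exact MeasurableSet.empty
      have hKcov : K ⊆ ⋃ mm, Gm mm := by
        intro x hx
        have h1 : θ / 2 < ⨆ mm, (if volume (VV mm) ≤ εk then η x (VV mm) else 0) :=
          lt_of_lt_of_le (ENNReal.half_lt_self hθ0.ne' hθtop) (le_trans hx (iInf_le _ k))
        obtain ⟨mm, hmm⟩ := lt_iSup_iff.1 h1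
        by_cases hvol : volume (VV mm) ≤ εk
        · rw [if_pos hvol] at hmm
          refine Set.mem_iUnion.2 ⟨mm, ?_⟩
          simp only [hGmdef]
          rw [if_pos hvol]
          exact hmm
        · rw [if_neg hvol] at hmm
          exact absurd hmm (by simp)
      set D : ℕ → Set (Euc n) := disjointed (fun j => K ∩ Gm j) with hDdef
      have hDm : ∀ mm, MeasurableSet (D mm) :=
        MeasurableSet.disjointed fun j => hKm.inter (hGmm j)
      have hDdisj : Pairwise (Function.onFun Disjoint D) := disjoint_disjointed _
      have hDsub : ∀ mm, D mm ⊆ K ∩ Gm mm := disjointed_subset _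
      have hDunion : ⋃ mm, D mm = K := by
        rw [hDdef, iUnion_disjointed, ← Set.inter_iUnion]
        exact Set.inter_eq_left.2 hKcov
      have hνK : ν K = ∑' mm, ν (D mm) := by
        rw [← hDunion, measure_iUnion hDdisj hDm]
      have hνKne : ν K ≠ ∞ := measure_ne_top ν K
      have hs2ne0 : s / 2 ≠ 0 := (ENNReal.half_pos hs0.ne').ne'
      obtain ⟨J, hJ⟩ : ∃ J, ν K ≤ (∑ mm ∈ Finset.range J, ν (D mm)) + s / 2 := by
        rcases le_or_gt (ν K) (s / 2) with hle | hlt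
        · exact ⟨0, by simpa using hle⟩
        · have h2 : ν K - s / 2 < ∑' mm, ν (D mm) := by
            rw [← hνK]
            exact ENNReal.sub_lt_self hνKne (pos_of_gt hlt).ne' hs2ne0
          rw [ENNReal.tsum_eq_iSup_sum] at h2
          obtain ⟨fs, hfs⟩ := lt_iSup_iff.1 h2
          obtain ⟨J, hJsub⟩ := fs.exists_nat_subset_range
          refine ⟨J, ?_⟩
          have h3 : ν K - s / 2 ≤ ∑ mm ∈ Finset.range J, ν (D mm) :=
            le_trans hfs.le (Finset.sum_le_sum_of_subset hJsub)
          exact tsub_le_iff_right.1 h3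
      have hcomp : ∀ mm, ∃ Cs : Set (Euc n), Cs ⊆ D mm ∧ IsCompact Cs ∧
          ν (D mm \ Cs) ≤ s / 2 * (2⁻¹ : ℝ≥0∞) ^ (mm + 1) := by
        intro mm
        have hsm0 : s / 2 * (2⁻¹ : ℝ≥0∞) ^ (mm + 1) ≠ 0 :=
          mul_ne_zero hs2ne0 (ENNReal.pow_ne_zero (by simp) _)
        obtain ⟨Cs, h1, h2, h3⟩ := (hDm mm).exists_isCompact_diff_lt (measure_ne_top ν _) hsm0
        exact ⟨Cs, h1, h2, h3.le⟩
      choose Cs hCsub hCcomp hCdiff using hcomp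
      have hest : ∀ mm, θ / 2 * ν (Cs mm) ≤ carath ζp (Cs mm) * εk ^ rExp p := by
        intro mm
        by_cases hvol : volume (VV mm) ≤ εk
        · have hsub : ∀ x ∈ Cs mm, θ / 2 < η x (VV mm) := by
            intro x hx
            have h1 : x ∈ Gm mm := (hDsub mm (hCsub mm hx)).2
            simp only [hGmdef] at h1
            rw [if_pos hvol] at h1
            exact h1
          have hCsm : MeasurableSet (Cs mm) := (hCcomp mm).isClosed.measurableSet
          have hmeasA : MeasurableSet ((Cs mm) ×ˢ VV mm) := hCsm.prod (hVVm mm)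
          have hslice : ∀ x, η x {lam | (x, lam) ∈ (Cs mm) ×ˢ VV mm} =
              (Cs mm).indicator (fun x => η x (VV mm)) x := by
            intro x
            by_cases hx : x ∈ Cs mm
            · rw [Set.indicator_of_mem hx]
              congr 1
              ext lam
              simp [hx]
            · rw [Set.indicator_of_notMem hx]
              have hempty : {lam | (x, lam) ∈ (Cs mm) ×ˢ VV mm} = (∅ : Set (Euc l)) := by
                ext lam; simp [hx]
              rw [hempty, measure_empty]
          calc θ / 2 * ν (Cs mm) = ∫⁻ _ in Cs mm, θ / 2 ∂ν := (setLIntegral_const _ _).symm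
            _ ≤ ∫⁻ x in Cs mm, η x (VV mm) ∂ν :=
                setLIntegral_mono (hηmeas _ (hVVm mm)) fun x hx => (hsub x hx).le
            _ = ∫⁻ x, (Cs mm).indicator (fun x => η x (VV mm)) x ∂ν :=
                (lintegral_indicator hCsm _).symm
            _ = hatIG Λ μ ((Cs mm) ×ˢ VV mm) := by
                rw [hdis _ hmeasA]
                exact lintegral_congr fun x => (hslice x).symm
            _ ≤ carath ζp (Cs mm) * volume (VV mm ∩ Λ) ^ rExp p := by
                refine hatIG_prod_le hΛm hμ hp _ (hVVm mm) ?_ ?_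
                · exact ne_top_of_le_ne_top hM (carath_mono (Set.subset_univ _))
                · exact ne_top_of_le_ne_top hΛvol (measure_mono Set.inter_subset_right)
            _ ≤ carath ζp (Cs mm) * εk ^ rExp p := by
                refine mul_le_mul_right ?_ _
                exact ENNReal.rpow_le_rpow
                  (le_trans (measure_mono Set.inter_subset_left) hvol) (rExp_nonneg hp)
        · have h1 : Cs mm = ∅ := by
            refine Set.eq_empty_of_subset_empty ?_
            intro x hx
            have h2 : x ∈ Gm mm := (hDsub mm (hCsub mm hx)).2
            simp only [hGmdef] at h2
            rw [if_neg hvol] at h2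
            exact h2
          simp [h1]
      have hsup : ∑ mm ∈ Finset.range J, carath ζp (Cs mm) ≤ carath ζp Set.univ := by
        refine le_trans (carath_superadd_compacts hζp0 Cs hCcomp ?_ J)
          (carath_mono (Set.subset_univ _))
        intro i j hij
        exact ((hDdisj hij).mono (hCsub i) (hCsub j))
      have hgeom : ∑ mm ∈ Finset.range J, (2⁻¹ : ℝ≥0∞) ^ (mm + 1) ≤ 1 := by
        refine le_trans (ENNReal.sum_le_tsum _) ?_
        rw [ENNReal.tsum_geometric_add_one, ENNReal.one_sub_inv_two, inv_inv,
          ENNReal.inv_mul_cancel (by norm_num) (by norm_num)]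
      calc θ / 2 * ν K ≤ θ / 2 * ((∑ mm ∈ Finset.range J, ν (D mm)) + s / 2) :=
            mul_le_mul_right hJ _
        _ ≤ θ / 2 * ((∑ mm ∈ Finset.range J,
              (ν (Cs mm) + s / 2 * (2⁻¹ : ℝ≥0∞) ^ (mm + 1))) + s / 2) := by
            refine mul_le_mul_right (add_le_add_left (Finset.sum_le_sum fun mm _ => ?_) _) _
            have hsplit : D mm ⊆ Cs mm ∪ (D mm \ Cs mm) := by
              rw [Set.union_diff_cancel (hCsub mm)]
            calc ν (D mm) ≤ ν (Cs mm ∪ (D mm \ Cs mm)) := measure_mono hsplit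
              _ ≤ ν (Cs mm) + ν (D mm \ Cs mm) := measure_union_le _ _
              _ ≤ ν (Cs mm) + s / 2 * (2⁻¹ : ℝ≥0∞) ^ (mm + 1) :=
                  add_le_add_right (hCdiff mm) _
        _ ≤ θ / 2 * ((∑ mm ∈ Finset.range J, ν (Cs mm)) + s / 2 + s / 2) := by
            refine mul_le_mul_right ?_ _
            rw [Finset.sum_add_distrib]
            refine add_le_add_left (add_le_add_right ?_ _) _
            calc ∑ mm ∈ Finset.range J, s / 2 * (2⁻¹ : ℝ≥0∞) ^ (mm + 1)
                = s / 2 * ∑ mm ∈ Finset.range J, (2⁻¹ : ℝ≥0∞) ^ (mm + 1) := by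
                  rw [Finset.mul_sum]
              _ ≤ s / 2 * 1 := mul_le_mul_right hgeom _
              _ = s / 2 := mul_one _
        _ = θ / 2 * ((∑ mm ∈ Finset.range J, ν (Cs mm)) + s) := by
            rw [add_assoc, ENNReal.add_halves]
        _ = θ / 2 * (∑ mm ∈ Finset.range J, ν (Cs mm)) + θ / 2 * s := mul_add _ _ _
        _ = (∑ mm ∈ Finset.range J, θ / 2 * ν (Cs mm)) + θ / 2 * s := by
            rw [Finset.mul_sum]
        _ ≤ (∑ mm ∈ Finset.range J, carath ζp (Cs mm) * εk ^ rExp p) + θ / 2 * s :=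
            add_le_add_left (Finset.sum_le_sum fun mm _ => hest mm) _
        _ = (∑ mm ∈ Finset.range J, carath ζp (Cs mm)) * εk ^ rExp p + θ / 2 * s := by
            rw [← Finset.sum_mul]
        _ ≤ carath ζp Set.univ * εk ^ rExp p + θ / 2 * s :=
            add_le_add_left (mul_le_mul_left hsup _) _
    have main2 : ∀ k : ℕ, θ / 2 * ν K ≤ carath ζp Set.univ * ((2⁻¹ : ℝ≥0∞) ^ k) ^ rExp p := by
      intro k
      refine ENNReal.le_of_forall_pos_le_add fun ε hε hlt => ?_
      set s : ℝ≥0∞ := (ε : ℝ≥0∞) / (θ / 2) with hsdef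
      have hs0 : 0 < s := ENNReal.div_pos (by exact_mod_cast hε.ne') hθ2netop
      have hstop : s ≠ ∞ := (ENNReal.div_lt_top ENNReal.coe_ne_top hθ2ne0).ne
      have := main k s hs0 hstop
      rwa [hsdef, ENNReal.mul_div_cancel hθ2ne0 hθ2netop] at this
    have hzero : θ / 2 * ν K ≤ 0 := by
      have hb : ((2⁻¹ : ℝ≥0∞)) ^ rExp p < 1 :=
        ENNReal.rpow_lt_one (ENNReal.inv_lt_one.2 (by norm_num)) hrpos
      have hconv : Tendsto (fun k : ℕ => carath ζp Set.univ * ((2⁻¹ : ℝ≥0∞) ^ rExp p) ^ k)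
          atTop (𝓝 0) := by
        have h1 := ENNReal.tendsto_pow_atTop_nhds_zero_of_lt_one hb
        have h2 := ENNReal.Tendsto.const_mul h1 (Or.inr hM)
        simpa using h2
      refine ge_of_tendsto hconv (Filter.Eventually.of_forall fun k => ?_)
      have hrw : ((2⁻¹ : ℝ≥0∞) ^ k) ^ rExp p = ((2⁻¹ : ℝ≥0∞) ^ rExp p) ^ k := by
        rw [← ENNReal.rpow_natCast (2⁻¹ : ℝ≥0∞) k,
          ← ENNReal.rpow_natCast ((2⁻¹ : ℝ≥0∞) ^ rExp p) k,
          ← ENNReal.rpow_mul, ← ENNReal.rpow_mul, mul_comm]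
      rw [← hrw]
      exact main2 k
    have : θ / 2 * ν K = 0 := le_antisymm hzero zero_le
    rcases mul_eq_zero.1 this with h | h
    · exact absurd h hθ2ne0
    · exact h
  -- conclusion
  have hnull : ν {x | ¬ η x ≪ volume} = 0 := by
    refine measure_mono_null
      (?_ : _ ⊆ ⋃ t : ℕ, {x | (((t : ℝ≥0∞) + 1))⁻¹ ≤ F x}) ?_
    · intro x hx
      have h0 : 0 < F x := hbad hx
      obtain ⟨t, ht⟩ := ENNReal.exists_inv_nat_lt h0.ne'
      refine Set.mem_iUnion.2 ⟨t, ?_⟩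
      have h1 : (((t : ℝ≥0∞) + 1))⁻¹ ≤ ((t : ℝ≥0∞))⁻¹ :=
        ENNReal.inv_le_inv' le_self_add
      exact le_trans h1 ht.le
    · refine measure_iUnion_null fun t => hclaim _ ?_ ?_
      · exact ENNReal.inv_pos.2 (by simp)
      · exact ENNReal.inv_ne_top.2 (by simp)
  exact ae_iff.2 hnull

end Slicing
end
end
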